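/- In ℝ³, let K(dx) := C₁·min{1, |x|⁻¹} dx and L(dx) := C₂·e^{−c|x|}·|x|⁻² dx with constants C₁, C₂ < ∞, c > 0. Then there exists C < ∞ such that for all r ∈ (0,1): Σ_{z ∈ ℤ³} K(B(zr, 3r))·L(B(zr, 2r)) ≤ C·r³ and Σ_{z ∈ ℤ³} L(B(zr, 3r))·L(B(zr, 2r)) ≤ C·r². -/

import Mathlib

open MeasureTheory ProbabilityTheory InnerProductGeometry Real Set
open scoped ENNReal NNReal

noncomputable section

abbrev E3 : Type := EuclideanSpace ℝ (Fin 3)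
abbrev S2 : Type := Metric.sphere (0 : E3) 1

/-- Uniform (normalized) probability measure on the unit sphere `S²`. -/
noncomputable def uniformS2 : Measure S2 :=
  ((volume : Measure E3).toSphere Set.univ)⁻¹ • (volume : Measure E3).toSphere

/-- Uniform measure on `S²`, viewed as a measure on `ℝ³` (supported on the sphere). -/
noncomputable def uniformS2amb : Measure E3 := uniformS2.map Subtype.val

/-- Cross product on `ℝ³`. -/
noncomputable def cross3 (u v : E3) : E3 :=
  (WithLp.equiv 2 (Fin 3 → ℝ)).symm
    (crossProduct ((WithLp.equiv 2 (Fin 3 → ℝ)) u) ((WithLp.equiv 2 (Fin 3 → ℝ)) v))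

/-- The measure `K(dx) = C₁·min{1,|x|⁻¹} dx` on `ℝ³`. -/
noncomputable def measK (C₁ : ℝ) : Measure E3 :=
  volume.withDensity fun x => ENNReal.ofReal (C₁ * min 1 ‖x‖⁻¹)

/-- The measure `L(dx) = C₂·e^{−c|x|}|x|⁻² dx` on `ℝ³`. -/
noncomputable def measL (C₂ c : ℝ) : Measure E3 :=
  volume.withDensity fun x => ENNReal.ofReal (C₂ * Real.exp (-c * ‖x‖) * (‖x‖ ^ 2)⁻¹)

/-- The measure `M(dx) = C₃·e^{−c|x|} dx` on `ℝ³`. -/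
noncomputable def measM (C₃ c : ℝ) : Measure E3 :=
  volume.withDensity fun x => ENNReal.ofReal (C₃ * Real.exp (-c * ‖x‖))

/-- The scaled lattice point `z·r ∈ ℝ³` for `z ∈ ℤ³`. -/
noncomputable def latPt (r : ℝ) (z : Fin 3 → ℤ) : E3 :=
  (WithLp.equiv 2 (Fin 3 → ℝ)).symm fun i => (z i : ℝ) * r

open Metric

lemma polar3 (f : ℝ → ℝ≥0∞) (hf : Measurable f) :
    ∫⁻ x : E3, f ‖x‖ =
      (volume : Measure E3).toSphere univ *
        ∫⁻ y in Ioi (0:ℝ), ENNReal.ofReal (y ^ 2) * f y := by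
  have h1 : ∫⁻ x : E3, f ‖x‖ = ∫⁻ x : ({0}ᶜ : Set E3), f ‖x.1‖ ∂((volume : Measure E3).comap (↑)) := by
    rw [lintegral_subtype_comap (measurableSet_singleton _).compl fun x ↦ f ‖x‖,
      MeasureTheory.restrict_compl_singleton]
  rw [h1]
  have h2 := (volume : Measure E3).measurePreserving_homeomorphUnitSphereProd
  have hfm : Measurable (fun p : (sphere (0:E3) 1 × Ioi (0:ℝ)) => f p.2) :=
    hf.comp (measurable_subtype_coe.comp measurable_snd)
  have h3 : ∫⁻ x : ({0}ᶜ : Set E3), f ‖x.1‖ ∂((volume : Measure E3).comap (↑))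
      = ∫⁻ p : (sphere (0:E3) 1 × Ioi (0:ℝ)), f p.2
          ∂(((volume : Measure E3).toSphere).prod (.volumeIoiPow (Module.finrank ℝ E3 - 1))) := by
    rw [← h2.lintegral_comp hfm]
    simp only [homeomorphUnitSphereProd_apply_snd_coe]
  rw [h3, lintegral_prod _ hfm.aemeasurable]
  simp only [lintegral_const]
  have h4 : ∫⁻ y : Ioi (0:ℝ), f y.1 ∂(Measure.volumeIoiPow (Module.finrank ℝ E3 - 1))
      = ∫⁻ y in Ioi (0:ℝ), ENNReal.ofReal (y ^ 2) * f y := by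
    have : Module.finrank ℝ E3 - 1 = 2 := by simp [finrank_euclideanSpace_fin]
    rw [this, Measure.volumeIoiPow,
      lintegral_withDensity_eq_lintegral_mul _ (by fun_prop)
        (g := fun y : Ioi (0:ℝ) => f y.1) (hf.comp measurable_subtype_coe)]
    rw [show ((fun r : Ioi (0:ℝ) => ENNReal.ofReal (r.1 ^ 2)) * fun y : Ioi (0:ℝ) => f y.1)
        = fun y : Ioi (0:ℝ) => ENNReal.ofReal (y.1 ^ 2) * f y.1 from rfl,
      lintegral_subtype_comap measurableSet_Ioi (fun y : ℝ => ENNReal.ofReal (y ^ 2) * f y)]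
  rw [h4, mul_comm]

def sphC : ℝ≥0∞ := (volume : Measure E3).toSphere univ

lemma sphC_ne_top : sphC ≠ ⊤ := measure_ne_top _ _

lemma lint_ball_invsq {ρ : ℝ} (hρ : 0 ≤ ρ) :
    ∫⁻ x : E3 in closedBall 0 ρ, ENNReal.ofReal ((‖x‖ ^ 2)⁻¹)
      ≤ sphC * ENNReal.ofReal ρ := by
  set f : ℝ → ℝ≥0∞ := fun y => Set.indicator (Iic ρ) (fun y => ENNReal.ofReal ((y^2)⁻¹)) y with hfdef
  have hf : Measurable f := Measurable.indicator (by fun_prop) measurableSet_Iic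
  have h0 : ∫⁻ x : E3 in closedBall 0 ρ, ENNReal.ofReal ((‖x‖ ^ 2)⁻¹) = ∫⁻ x : E3, f ‖x‖ := by
    rw [← lintegral_indicator (measurableSet_closedBall)]
    refine lintegral_congr fun x => ?_
    simp only [hfdef, Set.indicator, mem_closedBall, mem_Iic, dist_zero_right]
  rw [h0, polar3 f hf]
  refine mul_le_mul_right ?_ _
  have hb : ∫⁻ y in Ioi (0:ℝ), Set.indicator (Iic ρ) (fun _ => (1:ℝ≥0∞)) y = ENNReal.ofReal ρ := by
    rw [lintegral_indicator measurableSet_Iic, Measure.restrict_restrict measurableSet_Iic,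
      setLIntegral_one, Iic_inter_Ioi, Real.volume_Ioc, sub_zero]
  calc ∫⁻ y in Ioi (0:ℝ), ENNReal.ofReal (y ^ 2) * f y
      ≤ ∫⁻ y in Ioi (0:ℝ), Set.indicator (Iic ρ) (fun _ => (1:ℝ≥0∞)) y := by
        refine setLIntegral_mono' measurableSet_Ioi fun y hy => ?_
        by_cases h : y ∈ Iic ρ
        · simp only [hfdef, Set.indicator_of_mem h]
          rw [← ENNReal.ofReal_mul (by positivity), mul_inv_cancel₀ (by have := hy.out; positivity : (y:ℝ)^2 ≠ 0)]
          simp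
        · simp [hfdef, Set.indicator_of_notMem h]
    _ = ENNReal.ofReal ρ := hb

lemma lint_exp_invsq {c : ℝ} (hc : 0 < c) :
    ∫⁻ x : E3, ENNReal.ofReal (Real.exp (-c * ‖x‖) * (‖x‖ ^ 2)⁻¹)
      ≤ sphC * ENNReal.ofReal c⁻¹ := by
  set f : ℝ → ℝ≥0∞ := fun y => ENNReal.ofReal (Real.exp (-c * y) * (y ^ 2)⁻¹) with hfdef
  have hf : Measurable f := by fun_prop
  rw [show (∫⁻ x : E3, ENNReal.ofReal (Real.exp (-c * ‖x‖) * (‖x‖ ^ 2)⁻¹)) = ∫⁻ x : E3, f ‖x‖ from rfl,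
    polar3 f hf]
  refine mul_le_mul_right ?_ _
  have heq : ∫⁻ y in Ioi (0:ℝ), ENNReal.ofReal (y ^ 2) * f y
      = ∫⁻ y in Ioi (0:ℝ), ENNReal.ofReal (Real.exp (-c * y)) := by
    refine setLIntegral_congr_fun measurableSet_Ioi (fun y hy => ?_)
    rw [hfdef]
    rw [← ENNReal.ofReal_mul (by positivity), ← mul_assoc, mul_comm ((y:ℝ)^2),
      mul_assoc, mul_inv_cancel₀ (by have := hy.out; positivity : (y:ℝ)^2 ≠ 0), mul_one]
  rw [heq, ← ofReal_integral_eq_lintegral_ofReal (exp_neg_integrableOn_Ioi 0 hc)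
    (Filter.Eventually.of_forall fun y => (Real.exp_pos _).le)]
  refine ENNReal.ofReal_le_ofReal ?_
  have : ∫ y in Ioi (0:ℝ), Real.exp (-c * y) = c⁻¹ • ∫ u in Ioi (c*0:ℝ), Real.exp (-u) := by
    rw [← integral_comp_mul_left_Ioi (fun u => Real.exp (-u)) 0 hc]
    simp [neg_mul]
  rw [this, mul_zero, integral_exp_neg_Ioi_zero, smul_eq_mul, mul_one]

lemma lint_min_invsq {r : ℝ} (hr : 0 < r) :
    ∫⁻ x : E3, ENNReal.ofReal (min 1 (r ^ 2 * (‖x‖ ^ 2)⁻¹) * (‖x‖ ^ 2)⁻¹)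
      ≤ sphC * ENNReal.ofReal (2 * r) := by
  set f : ℝ → ℝ≥0∞ := fun y => ENNReal.ofReal (min 1 (r ^ 2 * (y ^ 2)⁻¹) * (y ^ 2)⁻¹) with hfdef
  have hf : Measurable f := by fun_prop
  rw [show (∫⁻ x : E3, ENNReal.ofReal (min 1 (r ^ 2 * (‖x‖ ^ 2)⁻¹) * (‖x‖ ^ 2)⁻¹)) = ∫⁻ x : E3, f ‖x‖ from rfl,
    polar3 f hf]
  refine mul_le_mul_right ?_ _
  have heq : ∫⁻ y in Ioi (0:ℝ), ENNReal.ofReal (y ^ 2) * f y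
      = ∫⁻ y in Ioi (0:ℝ), ENNReal.ofReal (min 1 (r ^ 2 * (y ^ 2)⁻¹)) := by
    refine setLIntegral_congr_fun measurableSet_Ioi (fun y hy => ?_)
    rw [hfdef]
    rw [← ENNReal.ofReal_mul (by positivity), ← mul_assoc, mul_comm ((y:ℝ)^2),
      mul_assoc, mul_inv_cancel₀ (by have := hy.out; positivity : (y:ℝ)^2 ≠ 0), mul_one]
  rw [heq, ← Ioc_union_Ioi_eq_Ioi hr.le, lintegral_union measurableSet_Ioi Ioc_disjoint_Ioi_same]
  have h1 : ∫⁻ y in Ioc (0:ℝ) r, ENNReal.ofReal (min 1 (r ^ 2 * (y ^ 2)⁻¹))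
      ≤ ENNReal.ofReal r := by
    calc ∫⁻ y in Ioc (0:ℝ) r, ENNReal.ofReal (min 1 (r ^ 2 * (y ^ 2)⁻¹))
        ≤ ∫⁻ _ in Ioc (0:ℝ) r, 1 := by
          refine setLIntegral_mono' measurableSet_Ioc fun y _ => ?_
          simpa using ENNReal.ofReal_le_ofReal (min_le_left _ _)
      _ = ENNReal.ofReal r := by rw [setLIntegral_one, Real.volume_Ioc, sub_zero]
  have h2 : ∫⁻ y in Ioi r, ENNReal.ofReal (min 1 (r ^ 2 * (y ^ 2)⁻¹))
      ≤ ENNReal.ofReal r := by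
    have hint : IntegrableOn (fun y : ℝ => r ^ 2 * y ^ (-2:ℝ)) (Ioi r) :=
      (integrableOn_Ioi_rpow_of_lt (by norm_num) hr).const_mul _
    calc ∫⁻ y in Ioi r, ENNReal.ofReal (min 1 (r ^ 2 * (y ^ 2)⁻¹))
        ≤ ∫⁻ y in Ioi r, ENNReal.ofReal (r ^ 2 * y ^ (-2:ℝ)) := by
          refine setLIntegral_mono' measurableSet_Ioi fun y hy => ?_
          refine ENNReal.ofReal_le_ofReal ((min_le_right _ _).trans (le_of_eq ?_))
          rw [Real.rpow_neg (le_trans hr.le hy.out.le), Real.rpow_two]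
      _ = ENNReal.ofReal (∫ y in Ioi r, r ^ 2 * y ^ (-2:ℝ)) := by
          rw [← ofReal_integral_eq_lintegral_ofReal hint ((ae_restrict_mem measurableSet_Ioi).mono
            fun y hy => by have : (0:ℝ) < y := hr.trans hy; positivity)]
      _ ≤ ENNReal.ofReal r := by
          rw [integral_const_mul, integral_Ioi_rpow_of_lt (by norm_num) hr]
          refine ENNReal.ofReal_le_ofReal (le_of_eq ?_)
          rw [show (-2:ℝ)+1 = -1 by norm_num, Real.rpow_neg_one]
          field_simp
  calc _ ≤ ENNReal.ofReal r + ENNReal.ofReal r := add_le_add h1 h2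
    _ = ENNReal.ofReal (2*r) := by rw [← ENNReal.ofReal_add hr.le hr.le]; ring_nf

lemma latPt_apply (r : ℝ) (z : Fin 3 → ℤ) (i : Fin 3) : latPt r z i = (z i : ℝ) * r := rfl

lemma coord_le_norm (v : E3) (i : Fin 3) : |v i| ≤ ‖v‖ := by
  rw [EuclideanSpace.norm_eq, ← Real.sqrt_sq_eq_abs]
  refine Real.sqrt_le_sqrt ?_
  have := Finset.single_le_sum (f := fun j => ‖v j‖ ^ 2)
    (fun j _ => by positivity) (Finset.mem_univ i)
  simpa [Real.norm_eq_abs, sq_abs] using this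

lemma abs_coord_le (z : Fin 3 → ℤ) (i : Fin 3) : |(z i : ℝ)| ≤ ‖z‖ := by
  have := norm_le_pi_norm z i
  rw [Int.norm_eq_abs] at this
  push_cast at this
  exact this

lemma norm_nonneg_z (z : Fin 3 → ℤ) : 0 ≤ ‖z‖ := norm_nonneg _

lemma norm_latPt_le (r : ℝ) (hr : 0 ≤ r) (z : Fin 3 → ℤ) : ‖latPt r z‖ ≤ 2 * ‖z‖ * r := by
  rw [EuclideanSpace.norm_eq]
  have key : ∀ i : Fin 3, ‖latPt r z i‖ ^ 2 ≤ (‖z‖ * r) ^ 2 := fun i => by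
    rw [latPt_apply, Real.norm_eq_abs]
    have h1 : |(z i : ℝ) * r| ≤ ‖z‖ * r := by
      rw [abs_mul, abs_of_nonneg hr]
      exact mul_le_mul_of_nonneg_right (abs_coord_le z i) hr
    exact pow_le_pow_left₀ (abs_nonneg _) h1 2
  have h : ∑ i, ‖latPt r z i‖ ^ 2 ≤ (2 * ‖z‖ * r) ^ 2 := by
    have h0 := key 0; have h1 := key 1; have h2 := key 2
    have hzr : 0 ≤ (‖z‖ * r)^2 := sq_nonneg _
    rw [Fin.sum_univ_three]
    nlinarith [norm_nonneg_z z]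
  calc Real.sqrt (∑ i, ‖latPt r z i‖ ^ 2) ≤ Real.sqrt ((2 * ‖z‖ * r) ^ 2) :=
        Real.sqrt_le_sqrt h
    _ = 2 * ‖z‖ * r := Real.sqrt_sq (by positivity)

lemma norm_latPt_ge (r : ℝ) (hr : 0 < r) (z : Fin 3 → ℤ) : ‖z‖ * r ≤ ‖latPt r z‖ := by
  have h : ∀ i, ‖z i‖ ≤ ‖latPt r z‖ / r := by
    intro i
    rw [Int.norm_eq_abs, ← Int.cast_abs, le_div_iff₀ hr]
    have := coord_le_norm (latPt r z) i
    rw [latPt_apply, abs_mul, abs_of_nonneg hr.le] at this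
    calc (|z i| : ℤ) * r = |(z i : ℝ)| * r := by push_cast; ring
      _ ≤ ‖latPt r z‖ := this
  have := pi_norm_le_iff_of_nonneg (by positivity : (0:ℝ) ≤ ‖latPt r z‖ / r) |>.2 h
  rwa [← le_div_iff₀ hr]

lemma mem_ball_coord {x : E3} {z : Fin 3 → ℤ} {r a : ℝ} (ha : a ≤ 3)
    (hx : x ∈ closedBall (latPt r z) (a * r)) (hr : 0 < r) (i : Fin 3) :
    |x i - (z i : ℝ) * r| ≤ 3 * r := by
  have h1 : ‖x - latPt r z‖ ≤ a * r := by
    rwa [mem_closedBall, dist_eq_norm] at hx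
  have h2 : |(x - latPt r z) i| ≤ ‖x - latPt r z‖ := coord_le_norm _ i
  have h3 : (x - latPt r z) i = x i - (z i : ℝ) * r := rfl
  rw [h3] at h2
  nlinarith

lemma tsum_indicator_le (x : E3) {r a : ℝ} (hr : 0 < r) (ha : a ≤ 3) (φ : E3 → ℝ≥0∞) :
    (∑' z : Fin 3 → ℤ, (closedBall (latPt r z) (a * r)).indicator φ x) ≤ 343 * φ x := by
  set T : Finset (Fin 3 → ℤ) :=
    Finset.Icc (fun i => ⌈x i / r⌉ - 3) (fun i => ⌊x i / r⌋ + 3) with hT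
  have hmem : ∀ z : Fin 3 → ℤ, x ∈ closedBall (latPt r z) (a * r) → z ∈ T := by
    intro z hx
    rw [hT, Finset.mem_Icc]
    refine ⟨fun i => ?_, fun i => ?_⟩ <;>
      (have hco := abs_le.1 (mem_ball_coord ha hx hr i))
    · have h1 : x i / r - 3 ≤ (z i : ℝ) := by
        rw [show x i / r - 3 = (x i - 3*r)/r by field_simp; try ring, div_le_iff₀ hr]
        nlinarith
      have h2 : ⌈x i / r⌉ ≤ z i + 3 := Int.ceil_le.2 (by push_cast; linarith)
      show ⌈x i / r⌉ - 3 ≤ z i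
      omega
    · have h1 : (z i : ℝ) ≤ x i / r + 3 := by
        rw [show x i / r + 3 = (x i + 3*r)/r by field_simp; try ring, le_div_iff₀ hr]
        nlinarith
      have h2 : z i - 3 ≤ ⌊x i / r⌋ := Int.le_floor.2 (by push_cast; linarith)
      show z i ≤ ⌊x i / r⌋ + 3
      omega
  have hcard : T.card ≤ 343 := by
    rw [hT, Pi.card_Icc]
    have : ∀ i : Fin 3, (Finset.Icc (⌈x i / r⌉ - 3) (⌊x i / r⌋ + 3)).card ≤ 7 := by
      intro i
      rw [Int.card_Icc]
      have := Int.floor_le_ceil (x i / r)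
      omega
    calc ∏ i : Fin 3, (Finset.Icc (⌈x i / r⌉ - 3) (⌊x i / r⌋ + 3)).card
        ≤ ∏ _i : Fin 3, 7 := Finset.prod_le_prod (fun _ _ => Nat.zero_le _) (fun i _ => this i)
      _ = 343 := by norm_num
  calc (∑' z : Fin 3 → ℤ, (closedBall (latPt r z) (a * r)).indicator φ x)
      ≤ ∑' z : Fin 3 → ℤ, (if z ∈ T then φ x else 0) := by
        refine ENNReal.tsum_le_tsum fun z => ?_
        by_cases hx : x ∈ closedBall (latPt r z) (a * r)
        · rw [Set.indicator_of_mem hx, if_pos (hmem z hx)]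
        · rw [Set.indicator_of_notMem hx]; exact bot_le
    _ = ∑ z ∈ T, φ x := tsum_eq_sum (fun z hz => if_neg hz) |>.trans
        (Finset.sum_congr rfl fun z hz => if_pos hz)
    _ = (T.card : ℝ≥0∞) * φ x := by rw [Finset.sum_const, nsmul_eq_mul]
    _ ≤ 343 * φ x := by
        refine mul_le_mul_left ?_ _
        exact_mod_cast Nat.cast_le.2 hcard

lemma overlap_sum (ν : Measure E3) (φ : E3 → ℝ≥0∞) (hφ : Measurable φ) {r a : ℝ}
    (hr : 0 < r) (ha : a ≤ 3) :
    ∑' z : Fin 3 → ℤ, ∫⁻ x in closedBall (latPt r z) (a * r), φ x ∂ν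
      ≤ 343 * ∫⁻ x, φ x ∂ν := by
  have h1 : ∀ z : Fin 3 → ℤ, ∫⁻ x in closedBall (latPt r z) (a * r), φ x ∂ν
      = ∫⁻ x, (closedBall (latPt r z) (a * r)).indicator φ x ∂ν := fun z =>
    (lintegral_indicator measurableSet_closedBall φ).symm
  calc ∑' z : Fin 3 → ℤ, ∫⁻ x in closedBall (latPt r z) (a * r), φ x ∂ν
      = ∫⁻ x, ∑' z : Fin 3 → ℤ, (closedBall (latPt r z) (a * r)).indicator φ x ∂ν := by
        rw [tsum_congr h1, lintegral_tsum
          (fun z => (hφ.indicator measurableSet_closedBall).aemeasurable)]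
    _ ≤ ∫⁻ x, 343 * φ x ∂ν :=
        lintegral_mono fun x => tsum_indicator_le x hr ha φ
    _ = 343 * ∫⁻ x, φ x ∂ν := lintegral_const_mul _ hφ

def kap : ℝ≥0∞ := volume (ball (0:E3) 1)

def mz (z : Fin 3 → ℤ) : ℝ := ((max 1 ‖z‖) ^ 2)⁻¹

lemma mz_pos (z : Fin 3 → ℤ) : 0 < mz z := by
  have : (0:ℝ) < max 1 ‖z‖ := lt_of_lt_of_le one_pos (le_max_left _ _)
  rw [mz]; positivity

lemma mz_le_one (z : Fin 3 → ℤ) : mz z ≤ 1 := by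
  rw [mz]
  rw [inv_le_one_iff₀]
  right
  nlinarith [le_max_left 1 ‖z‖]

lemma densL_le (C₂ c : ℝ) (hC₂ : 0 ≤ C₂) (hc : 0 < c) (x : E3) :
    ENNReal.ofReal (C₂ * Real.exp (-c * ‖x‖) * (‖x‖ ^ 2)⁻¹)
      ≤ ENNReal.ofReal C₂ * ENNReal.ofReal ((‖x‖ ^ 2)⁻¹) := by
  rw [← ENNReal.ofReal_mul hC₂]
  refine ENNReal.ofReal_le_ofReal ?_
  have he : Real.exp (-c * ‖x‖) ≤ 1 :=
    Real.exp_le_one_iff.2 (by nlinarith [norm_nonneg x])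
  have h0 : (0:ℝ) ≤ (‖x‖^2)⁻¹ := by positivity
  have := mul_le_mul_of_nonneg_right (mul_le_mul_of_nonneg_left he hC₂) h0
  simpa using this

lemma measL_apply (C₂ c : ℝ) {s : Set E3} (hs : MeasurableSet s) :
    measL C₂ c s = ∫⁻ x in s, ENNReal.ofReal (C₂ * Real.exp (-c * ‖x‖) * (‖x‖ ^ 2)⁻¹) :=
  withDensity_apply _ hs

lemma measL_ball3_le (C₂ c : ℝ) (hC₂ : 0 ≤ C₂) (hc : 0 < c) {r : ℝ} (hr : 0 < r)
    (z : Fin 3 → ℤ) :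
    measL C₂ c (closedBall (latPt r z) (3*r))
      ≤ (sphC + kap) * ENNReal.ofReal (1600 * C₂ * (r * mz z)) := by
  rcases le_or_gt ‖z‖ 6 with hz | hz
  · -- near origin
    have hsub : closedBall (latPt r z) (3*r) ⊆ closedBall (0:E3) (15*r) := by
      intro x hx
      rw [mem_closedBall, dist_zero_right]
      have h1 : dist x (latPt r z) ≤ 3*r := hx
      have h2 : ‖latPt r z‖ ≤ 2 * ‖z‖ * r := norm_latPt_le r hr.le z
      calc ‖x‖ = dist x 0 := (dist_zero_right x).symm
        _ ≤ dist x (latPt r z) + dist (latPt r z) 0 := dist_triangle _ _ _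
        _ = dist x (latPt r z) + ‖latPt r z‖ := by rw [dist_zero_right]
        _ ≤ 15 * r := by nlinarith
    have hmz : (1:ℝ)/36 ≤ mz z := by
      rw [mz]
      rw [one_div, inv_le_inv₀ (by positivity) (by norm_num)]
      have h6 : (1:ℝ) ⊔ ‖z‖ ≤ 6 := max_le (by norm_num) hz
      have h1 : (1:ℝ) ≤ 1 ⊔ ‖z‖ := le_max_left _ _
      nlinarith
    calc measL C₂ c (closedBall (latPt r z) (3*r))
        ≤ measL C₂ c (closedBall (0:E3) (15*r)) := measure_mono hsub
      _ = ∫⁻ x in closedBall (0:E3) (15*r),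
            ENNReal.ofReal (C₂ * Real.exp (-c * ‖x‖) * (‖x‖ ^ 2)⁻¹) :=
          measL_apply _ _ measurableSet_closedBall
      _ ≤ ∫⁻ x in closedBall (0:E3) (15*r),
            ENNReal.ofReal C₂ * ENNReal.ofReal ((‖x‖ ^ 2)⁻¹) :=
          setLIntegral_mono' measurableSet_closedBall fun x _ => densL_le C₂ c hC₂ hc x
      _ = ENNReal.ofReal C₂ * ∫⁻ x in closedBall (0:E3) (15*r),
            ENNReal.ofReal ((‖x‖ ^ 2)⁻¹) := lintegral_const_mul _ (by fun_prop)
      _ ≤ ENNReal.ofReal C₂ * (sphC * ENNReal.ofReal (15*r)) :=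
          mul_le_mul_right (lint_ball_invsq (by positivity)) _
      _ ≤ (sphC + kap) * ENNReal.ofReal (1600 * C₂ * (r * mz z)) := by
          rw [← mul_assoc, mul_comm (ENNReal.ofReal C₂) sphC, mul_assoc,
            ← ENNReal.ofReal_mul hC₂]
          refine mul_le_mul' le_self_add (ENNReal.ofReal_le_ofReal ?_)
          nlinarith [mul_nonneg (mul_nonneg hC₂ hr.le) (sub_nonneg.2 hmz)]
  · -- far from origin
    have hx_lb : ∀ x ∈ closedBall (latPt r z) (3*r), ‖z‖ * r / 2 ≤ ‖x‖ := by
      intro x hx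
      have h1 : dist x (latPt r z) ≤ 3*r := hx
      have h2 : ‖z‖ * r ≤ ‖latPt r z‖ := norm_latPt_ge r hr z
      have h3 : ‖latPt r z‖ - ‖x‖ ≤ 3 * r := by
        have := abs_norm_sub_norm_le (latPt r z) x
        have h4 : dist (latPt r z) x ≤ 3*r := by rwa [dist_comm]
        rw [dist_eq_norm] at h4
        nlinarith [abs_le.1 this]
      nlinarith
    have hdens : ∀ x ∈ closedBall (latPt r z) (3*r),
        ENNReal.ofReal (C₂ * Real.exp (-c * ‖x‖) * (‖x‖ ^ 2)⁻¹)
          ≤ ENNReal.ofReal (C₂ * (4 * (‖z‖ * r)⁻¹ ^ 2)) := by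
      intro x hx
      have h0 : 0 < ‖z‖ * r := by nlinarith
      have h1 : ‖z‖ * r / 2 ≤ ‖x‖ := hx_lb x hx
      have h2 : (‖x‖^2)⁻¹ ≤ 4 * (‖z‖*r)⁻¹^2 := by
        have hsq : ((‖z‖*r)/2)^2 ≤ ‖x‖^2 := by nlinarith
        have hi := one_div_le_one_div_of_le (by positivity : (0:ℝ) < ((‖z‖*r)/2)^2) hsq
        rw [one_div, one_div] at hi
        refine hi.trans (le_of_eq ?_)
        field_simp
        ring
      refine ENNReal.ofReal_le_ofReal ?_
      have he : Real.exp (-c * ‖x‖) ≤ 1 :=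
        Real.exp_le_one_iff.2 (by nlinarith [norm_nonneg x])
      have hx2 : (0:ℝ) ≤ (‖x‖^2)⁻¹ := by positivity
      nlinarith [Real.exp_pos (-c * ‖x‖), mul_nonneg hC₂ hx2]
    calc measL C₂ c (closedBall (latPt r z) (3*r))
        = ∫⁻ x in closedBall (latPt r z) (3*r),
            ENNReal.ofReal (C₂ * Real.exp (-c * ‖x‖) * (‖x‖ ^ 2)⁻¹) :=
          measL_apply _ _ measurableSet_closedBall
      _ ≤ ∫⁻ _x in closedBall (latPt r z) (3*r),
            ENNReal.ofReal (C₂ * (4 * (‖z‖ * r)⁻¹ ^ 2)) :=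
          setLIntegral_mono' measurableSet_closedBall hdens
      _ = ENNReal.ofReal (C₂ * (4 * (‖z‖ * r)⁻¹ ^ 2)) *
            volume (closedBall (latPt r z) (3*r)) := setLIntegral_const _ _
      _ = ENNReal.ofReal (C₂ * (4 * (‖z‖ * r)⁻¹ ^ 2)) *
            (ENNReal.ofReal ((3*r) ^ 3) * kap) := by
          rw [Measure.addHaar_closedBall _ _ (by positivity)]
          norm_num [kap, finrank_euclideanSpace_fin]
      _ ≤ (sphC + kap) * ENNReal.ofReal (1600 * C₂ * (r * mz z)) := by
          rw [← mul_assoc, ← ENNReal.ofReal_mul (by positivity), mul_comm _ kap]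
          refine mul_le_mul' le_add_self (ENNReal.ofReal_le_ofReal ?_)
          have hmz : mz z = (‖z‖^2)⁻¹ := by
            rw [mz, max_eq_right (by linarith : (1:ℝ) ≤ ‖z‖)]
          rw [hmz]
          have h6 : (0:ℝ) < ‖z‖ := by linarith
          have : (‖z‖ * r)⁻¹^2 * (3*r)^3 = 27 * (‖z‖^2)⁻¹ * r := by
            field_simp
            ring
          nlinarith [mul_pos (mul_pos (by norm_num : (0:ℝ) < 27)
            (inv_pos.2 (by positivity : (0:ℝ) < ‖z‖^2))) hr, hC₂]

lemma kap_ne_top : kap ≠ ⊤ := (measure_ball_lt_top).ne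

lemma measK_ball3_le (C₁ : ℝ) (hC₁ : 0 ≤ C₁) {r : ℝ} (hr : 0 < r) (z : Fin 3 → ℤ) :
    measK C₁ (closedBall (latPt r z) (3*r)) ≤ kap * ENNReal.ofReal (27 * C₁ * r^3) := by
  calc measK C₁ (closedBall (latPt r z) (3*r))
      = ∫⁻ x in closedBall (latPt r z) (3*r), ENNReal.ofReal (C₁ * min 1 ‖x‖⁻¹) :=
        withDensity_apply _ measurableSet_closedBall
    _ ≤ ∫⁻ _x in closedBall (latPt r z) (3*r), ENNReal.ofReal C₁ := by
        refine setLIntegral_mono' measurableSet_closedBall fun x _ => ?_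
        refine ENNReal.ofReal_le_ofReal ?_
        have : min 1 ‖x‖⁻¹ ≤ 1 := min_le_left _ _
        nlinarith
    _ = ENNReal.ofReal C₁ * volume (closedBall (latPt r z) (3*r)) := setLIntegral_const _ _
    _ = ENNReal.ofReal C₁ * (ENNReal.ofReal ((3*r)^3) * kap) := by
        rw [Measure.addHaar_closedBall _ _ (by positivity)]
        norm_num [kap, finrank_euclideanSpace_fin]
    _ = kap * ENNReal.ofReal (27 * C₁ * r^3) := by
        rw [← mul_assoc, ← ENNReal.ofReal_mul hC₁, mul_comm _ kap]
        congr 1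
        congr 1
        ring

lemma mz_le_min (C₂ c : ℝ) {r : ℝ} (hr : 0 < r) (z : Fin 3 → ℤ) (x : E3)
    (hx : x ∈ closedBall (latPt r z) (3*r)) :
    ENNReal.ofReal (mz z) * ENNReal.ofReal (C₂ * Real.exp (-c * ‖x‖) * (‖x‖ ^ 2)⁻¹)
      ≤ 25 * (ENNReal.ofReal (min 1 (r ^ 2 * (‖x‖ ^ 2)⁻¹)) *
          ENNReal.ofReal (C₂ * Real.exp (-c * ‖x‖) * (‖x‖ ^ 2)⁻¹)) := by
  by_cases hx0 : x = 0
  · have : ENNReal.ofReal (C₂ * Real.exp (-c * ‖x‖) * (‖x‖ ^ 2)⁻¹) = 0 := by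
      simp [hx0]
    rw [this, mul_zero, mul_zero, mul_zero]
  · have hn : 0 < ‖x‖ := norm_pos_iff.2 hx0
    have hmax : (1:ℝ) ≤ max 1 ‖z‖ := le_max_left _ _
    have hzmax : ‖z‖ ≤ max 1 ‖z‖ := le_max_right _ _
    have hub : ‖x‖ ≤ 5 * max 1 ‖z‖ * r := by
      have h1 : dist x (latPt r z) ≤ 3*r := hx
      have h2 : ‖latPt r z‖ ≤ 2 * ‖z‖ * r := norm_latPt_le r hr.le z
      calc ‖x‖ = dist x 0 := (dist_zero_right x).symm
        _ ≤ dist x (latPt r z) + dist (latPt r z) 0 := dist_triangle _ _ _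
        _ = dist x (latPt r z) + ‖latPt r z‖ := by rw [dist_zero_right]
        _ ≤ 5 * max 1 ‖z‖ * r := by nlinarith
    have key : mz z ≤ 25 * min 1 (r ^ 2 * (‖x‖ ^ 2)⁻¹) := by
      have h3 : mz z / 25 ≤ r ^ 2 * (‖x‖ ^ 2)⁻¹ := by
        have hsq : ‖x‖^2 ≤ 25*(max 1 ‖z‖)^2*r^2 := by nlinarith
        have hinv := one_div_le_one_div_of_le (by positivity : (0:ℝ) < ‖x‖^2) hsq
        rw [one_div, one_div] at hinv
        calc mz z / 25 = r^2 * (25*(max 1 ‖z‖)^2*r^2)⁻¹ := by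
              rw [mz]; field_simp
          _ ≤ r^2 * (‖x‖^2)⁻¹ := mul_le_mul_of_nonneg_left hinv (sq_nonneg r)
      have h4 : mz z / 25 ≤ 1 := by
        have := mz_le_one z; linarith
      have : mz z / 25 ≤ min 1 (r ^ 2 * (‖x‖ ^ 2)⁻¹) := le_min h4 h3
      linarith
    calc ENNReal.ofReal (mz z) * ENNReal.ofReal (C₂ * Real.exp (-c * ‖x‖) * (‖x‖ ^ 2)⁻¹)
        ≤ ENNReal.ofReal (25 * min 1 (r ^ 2 * (‖x‖ ^ 2)⁻¹)) *
            ENNReal.ofReal (C₂ * Real.exp (-c * ‖x‖) * (‖x‖ ^ 2)⁻¹) :=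
          mul_le_mul_left (ENNReal.ofReal_le_ofReal key) _
      _ = 25 * (ENNReal.ofReal (min 1 (r ^ 2 * (‖x‖ ^ 2)⁻¹)) *
            ENNReal.ofReal (C₂ * Real.exp (-c * ‖x‖) * (‖x‖ ^ 2)⁻¹)) := by
          rw [ENNReal.ofReal_mul (by norm_num), ← mul_assoc]
          norm_num

section Assembly
variable (C₁ C₂ c : ℝ)

private def dL (x : E3) : ℝ≥0∞ := ENNReal.ofReal (C₂ * Real.exp (-c * ‖x‖) * (‖x‖ ^ 2)⁻¹)

lemma dL_meas : Measurable (dL C₂ c) := by unfold dL; fun_prop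

lemma lint_dL_le (hC₂ : 0 ≤ C₂) (hc : 0 < c) :
    ∫⁻ x, dL C₂ c x ≤ ENNReal.ofReal C₂ * (sphC * ENNReal.ofReal c⁻¹) := by
  have h1 : ∀ x : E3, dL C₂ c x
      = ENNReal.ofReal C₂ * ENNReal.ofReal (Real.exp (-c * ‖x‖) * (‖x‖ ^ 2)⁻¹) := fun x => by
    rw [dL, mul_assoc, ENNReal.ofReal_mul hC₂]
  rw [lintegral_congr h1, lintegral_const_mul _ (by fun_prop)]
  exact mul_le_mul_right (lint_exp_invsq hc) _

lemma lint_psi_dL_le (hC₂ : 0 ≤ C₂) (hc : 0 < c) {r : ℝ} (hr : 0 < r) :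
    ∫⁻ x, ENNReal.ofReal (min 1 (r ^ 2 * (‖x‖ ^ 2)⁻¹)) * dL C₂ c x
      ≤ ENNReal.ofReal C₂ * (sphC * ENNReal.ofReal (2 * r)) := by
  have h1 : ∀ x : E3, ENNReal.ofReal (min 1 (r ^ 2 * (‖x‖ ^ 2)⁻¹)) * dL C₂ c x
      ≤ ENNReal.ofReal C₂ * ENNReal.ofReal (min 1 (r ^ 2 * (‖x‖ ^ 2)⁻¹) * (‖x‖ ^ 2)⁻¹) := by
    intro x
    rw [dL, ← ENNReal.ofReal_mul (le_min zero_le_one (by positivity)),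
      ← ENNReal.ofReal_mul hC₂]
    refine ENNReal.ofReal_le_ofReal ?_
    have he : Real.exp (-c * ‖x‖) ≤ 1 :=
      Real.exp_le_one_iff.2 (by nlinarith [norm_nonneg x])
    have h2 : (0:ℝ) ≤ (‖x‖^2)⁻¹ := by positivity
    have h3 : (0:ℝ) ≤ min 1 (r ^ 2 * (‖x‖ ^ 2)⁻¹) := le_min zero_le_one (by positivity)
    calc min 1 (r ^ 2 * (‖x‖ ^ 2)⁻¹) * (C₂ * Real.exp (-c * ‖x‖) * (‖x‖ ^ 2)⁻¹)
        = (C₂ * (min 1 (r ^ 2 * (‖x‖ ^ 2)⁻¹) * (‖x‖ ^ 2)⁻¹)) * Real.exp (-c * ‖x‖) := by ring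
      _ ≤ (C₂ * (min 1 (r ^ 2 * (‖x‖ ^ 2)⁻¹) * (‖x‖ ^ 2)⁻¹)) * 1 :=
          mul_le_mul_of_nonneg_left he (by positivity)
      _ = C₂ * (min 1 (r ^ 2 * (‖x‖ ^ 2)⁻¹) * (‖x‖ ^ 2)⁻¹) := mul_one _
  calc ∫⁻ x, ENNReal.ofReal (min 1 (r ^ 2 * (‖x‖ ^ 2)⁻¹)) * dL C₂ c x
      ≤ ∫⁻ x, ENNReal.ofReal C₂ *
          ENNReal.ofReal (min 1 (r ^ 2 * (‖x‖ ^ 2)⁻¹) * (‖x‖ ^ 2)⁻¹) := lintegral_mono h1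
    _ = ENNReal.ofReal C₂ *
          ∫⁻ x, ENNReal.ofReal (min 1 (r ^ 2 * (‖x‖ ^ 2)⁻¹) * (‖x‖ ^ 2)⁻¹) :=
        lintegral_const_mul _ (by fun_prop)
    _ ≤ _ := mul_le_mul_right (lint_min_invsq hr) _

lemma term2_le (hC₂ : 0 ≤ C₂) (hc : 0 < c) {r : ℝ} (hr : 0 < r) (z : Fin 3 → ℤ) :
    measL C₂ c (closedBall (latPt r z) (3*r)) * measL C₂ c (closedBall (latPt r z) (2*r))
      ≤ (sphC + kap) * ENNReal.ofReal (1600 * C₂ * r) *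
          (25 * ∫⁻ x in closedBall (latPt r z) (2*r),
            ENNReal.ofReal (min 1 (r ^ 2 * (‖x‖ ^ 2)⁻¹)) * dL C₂ c x) := by
  have hsub : closedBall (latPt r z) (2*r) ⊆ closedBall (latPt r z) (3*r) :=
    closedBall_subset_closedBall (by linarith)
  have step1 : measL C₂ c (closedBall (latPt r z) (3*r)) *
        measL C₂ c (closedBall (latPt r z) (2*r))
      ≤ ((sphC + kap) * (ENNReal.ofReal (1600 * C₂ * r) * ENNReal.ofReal (mz z))) *
        measL C₂ c (closedBall (latPt r z) (2*r)) := by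
    refine mul_le_mul_left ?_ _
    have := measL_ball3_le C₂ c hC₂ hc hr z
    rwa [show (1600 * C₂ * (r * mz z)) = (1600 * C₂ * r) * mz z by ring,
      ENNReal.ofReal_mul (by positivity), ← mul_assoc, mul_assoc] at this
  refine step1.trans ?_
  have step2 : ENNReal.ofReal (mz z) * measL C₂ c (closedBall (latPt r z) (2*r))
      ≤ 25 * ∫⁻ x in closedBall (latPt r z) (2*r),
          ENNReal.ofReal (min 1 (r ^ 2 * (‖x‖ ^ 2)⁻¹)) * dL C₂ c x := by
    have e1 : measL C₂ c (closedBall (latPt r z) (2*r))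
        = ∫⁻ x in closedBall (latPt r z) (2*r), dL C₂ c x :=
      measL_apply C₂ c measurableSet_closedBall
    rw [e1, ← lintegral_const_mul _ (dL_meas C₂ c),
      ← lintegral_const_mul _ (by have := dL_meas C₂ c; fun_prop)]
    refine setLIntegral_mono' measurableSet_closedBall fun x hx => ?_
    exact mz_le_min C₂ c hr z x (hsub hx)
  calc (sphC + kap) * (ENNReal.ofReal (1600 * C₂ * r) * ENNReal.ofReal (mz z)) *
        measL C₂ c (closedBall (latPt r z) (2*r))
      = (sphC + kap) * ENNReal.ofReal (1600 * C₂ * r) *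
          (ENNReal.ofReal (mz z) * measL C₂ c (closedBall (latPt r z) (2*r))) := by ring
    _ ≤ _ := mul_le_mul_right step2 _

end Assembly

/-- `Σ_z K(B(zr,3r))·L(B(zr,2r)) ≤ C·r³` and `Σ_z L(B(zr,3r))·L(B(zr,2r)) ≤ C·r²`. -/
theorem stmt_8 (C₁ C₂ c : ℝ) (hC₁ : 0 ≤ C₁) (hC₂ : 0 ≤ C₂) (hc : 0 < c) :
    ∃ C : ℝ, ∀ r ∈ Set.Ioo (0:ℝ) 1,
      (∑' z : Fin 3 → ℤ,
          measK C₁ (Metric.closedBall (latPt r z) (3*r)) *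
            measL C₂ c (Metric.closedBall (latPt r z) (2*r)))
        ≤ ENNReal.ofReal (C * r ^ 3) ∧
      (∑' z : Fin 3 → ℤ,
          measL C₂ c (Metric.closedBall (latPt r z) (3*r)) *
            measL C₂ c (Metric.closedBall (latPt r z) (2*r)))
        ≤ ENNReal.ofReal (C * r ^ 2) := by
  set D₁ : ℝ≥0∞ := kap * ENNReal.ofReal (27*C₁) *
    (343 * (ENNReal.ofReal C₂ * (sphC * ENNReal.ofReal c⁻¹))) with hD₁
  set D₂ : ℝ≥0∞ := (sphC + kap) * ENNReal.ofReal (1600*C₂) *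
    (25 * (343 * (ENNReal.ofReal C₂ * (sphC * ENNReal.ofReal (2:ℝ))))) with hD₂
  have hD₁t : D₁ ≠ ⊤ := by
    rw [hD₁]
    exact ENNReal.mul_ne_top (ENNReal.mul_ne_top kap_ne_top ENNReal.ofReal_ne_top)
      (ENNReal.mul_ne_top (by norm_num) (ENNReal.mul_ne_top ENNReal.ofReal_ne_top
        (ENNReal.mul_ne_top sphC_ne_top ENNReal.ofReal_ne_top)))
  have hD₂t : D₂ ≠ ⊤ := by
    rw [hD₂]
    refine ENNReal.mul_ne_top (ENNReal.mul_ne_top ?_ ENNReal.ofReal_ne_top)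
      (ENNReal.mul_ne_top (by norm_num) (ENNReal.mul_ne_top (by norm_num)
        (ENNReal.mul_ne_top ENNReal.ofReal_ne_top
          (ENNReal.mul_ne_top sphC_ne_top ENNReal.ofReal_ne_top))))
    exact ENNReal.add_ne_top.2 ⟨sphC_ne_top, kap_ne_top⟩
  refine ⟨max D₁.toReal D₂.toReal, fun r hr => ?_⟩
  obtain ⟨hr0, hr1⟩ := hr
  constructor
  · -- first sum
    have chain : (∑' z : Fin 3 → ℤ,
        measK C₁ (closedBall (latPt r z) (3*r)) * measL C₂ c (closedBall (latPt r z) (2*r)))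
        ≤ D₁ * ENNReal.ofReal (r^3) := by
      calc (∑' z : Fin 3 → ℤ,
            measK C₁ (closedBall (latPt r z) (3*r)) * measL C₂ c (closedBall (latPt r z) (2*r)))
          ≤ ∑' z : Fin 3 → ℤ,
            (kap * ENNReal.ofReal (27 * C₁ * r^3)) * measL C₂ c (closedBall (latPt r z) (2*r)) :=
            ENNReal.tsum_le_tsum fun z => mul_le_mul_left (measK_ball3_le C₁ hC₁ hr0 z) _
        _ = (kap * ENNReal.ofReal (27 * C₁ * r^3)) *
            ∑' z : Fin 3 → ℤ, measL C₂ c (closedBall (latPt r z) (2*r)) :=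
            ENNReal.tsum_mul_left
        _ ≤ (kap * ENNReal.ofReal (27 * C₁ * r^3)) *
            (343 * (ENNReal.ofReal C₂ * (sphC * ENNReal.ofReal c⁻¹))) := by
            refine mul_le_mul_right ?_ _
            have h1 : ∀ z : Fin 3 → ℤ, measL C₂ c (closedBall (latPt r z) (2*r))
                = ∫⁻ x in closedBall (latPt r z) (2*r), dL C₂ c x := fun z =>
              measL_apply C₂ c measurableSet_closedBall
            rw [tsum_congr h1]
            refine (overlap_sum volume (dL C₂ c) (dL_meas C₂ c) hr0 (by norm_num)).trans ?_
            exact mul_le_mul_right (lint_dL_le C₂ c hC₂ hc) _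
        _ = D₁ * ENNReal.ofReal (r^3) := by
            rw [hD₁, show (27 * C₁ * r^3) = (27*C₁) * r^3 by ring,
              ENNReal.ofReal_mul (by positivity)]
            ring
    refine chain.trans ?_
    conv_lhs => rw [← ENNReal.ofReal_toReal hD₁t]
    rw [← ENNReal.ofReal_mul ENNReal.toReal_nonneg]
    exact ENNReal.ofReal_le_ofReal
      (mul_le_mul_of_nonneg_right (le_max_left _ _) (by positivity))
  · -- second sum
    have chain : (∑' z : Fin 3 → ℤ,
        measL C₂ c (closedBall (latPt r z) (3*r)) * measL C₂ c (closedBall (latPt r z) (2*r)))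
        ≤ D₂ * ENNReal.ofReal (r^2) := by
      calc (∑' z : Fin 3 → ℤ,
            measL C₂ c (closedBall (latPt r z) (3*r)) * measL C₂ c (closedBall (latPt r z) (2*r)))
          ≤ ∑' z : Fin 3 → ℤ, (sphC + kap) * ENNReal.ofReal (1600 * C₂ * r) *
              (25 * ∫⁻ x in closedBall (latPt r z) (2*r),
                ENNReal.ofReal (min 1 (r ^ 2 * (‖x‖ ^ 2)⁻¹)) * dL C₂ c x) :=
            ENNReal.tsum_le_tsum fun z => term2_le C₂ c hC₂ hc hr0 z
        _ = ((sphC + kap) * ENNReal.ofReal (1600 * C₂ * r) * 25) *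
            ∑' z : Fin 3 → ℤ, ∫⁻ x in closedBall (latPt r z) (2*r),
                ENNReal.ofReal (min 1 (r ^ 2 * (‖x‖ ^ 2)⁻¹)) * dL C₂ c x := by
            rw [← ENNReal.tsum_mul_left]
            exact tsum_congr fun z => by ring
        _ ≤ ((sphC + kap) * ENNReal.ofReal (1600 * C₂ * r) * 25) *
            (343 * (ENNReal.ofReal C₂ * (sphC * ENNReal.ofReal (2 * r)))) := by
            refine mul_le_mul_right ?_ _
            refine (overlap_sum volume _ (by have := dL_meas C₂ c; fun_prop) hr0
              (by norm_num)).trans ?_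
            exact mul_le_mul_right (lint_psi_dL_le C₂ c hC₂ hc hr0) _
        _ = D₂ * ENNReal.ofReal (r^2) := by
            rw [hD₂, show (1600 * C₂ * r) = (1600*C₂) * r by ring,
              ENNReal.ofReal_mul (by positivity),
              show (2 * r : ℝ) = (2:ℝ) * r by ring,
              ENNReal.ofReal_mul (by norm_num : (0:ℝ) ≤ 2),
              show (r^2 : ℝ) = r * r by ring, ENNReal.ofReal_mul hr0.le]
            ring
    refine chain.trans ?_
    conv_lhs => rw [← ENNReal.ofReal_toReal hD₂t]
    rw [← ENNReal.ofReal_mul ENNReal.toReal_nonneg]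
    exact ENNReal.ofReal_le_ofReal
      (mul_le_mul_of_nonneg_right (le_max_right _ _) (by positivity))
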